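/- For all f, g, h ∈ G^0 and every word w, the pre-Lie associator satisfies ((f ◁ g) ◁ h − f ◁ (g ◁ h))(w) = Σ f(u v s)·(g(q)h(r) + h(q)g(r)), where the sum runs over all factorizations w = u q v r s into five consecutive factors with the middle factor v nonempty (and u, q, r, s possibly empty). In particular the associator is symmetric in g and h. -/

import Mathlib

/-- Words over the alphabet of positive integers. -/
abbrev Word : Type := List ℕ+

variable {A : Type*}

/-- The insertion (pre-Lie) product on series with zero constant coefficient:
`(f ◁ g)(w) = Σ f(u ++ v) g(q)` over all factorizations `w = u ++ q ++ v` of `w` into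
three consecutive (possibly empty) factors. -/
def tri [CommRing A] (f g : Word → A) : Word → A := fun w =>
  ∑ i ∈ Finset.range (w.length + 1), ∑ j ∈ Finset.Icc i w.length,
    f (w.take i ++ w.drop j) * g ((w.drop i).take (j - i))

/-- The factor of `w` occupying positions `a, a+1, …, b-1`. -/
def wfactor (w : Word) (a b : ℕ) : Word := (w.drop a).take (b - a)

section helpers

/-! ### List lemmas -/

lemma ulen (w : Word) (p q : ℕ) (hp : p ≤ q) (hq : q ≤ w.length) :
    (w.take p ++ w.drop q).length = p + (w.length - q) := by
  simp [List.length_append, List.length_take, List.length_drop]; omega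

lemma utake (w : Word) (p q i : ℕ) (hi : i ≤ p) (hq : p ≤ w.length) :
    (w.take p ++ w.drop q).take i = w.take i := by
  rw [List.take_append_of_le_length (by simp [List.length_take]; omega), List.take_take,
    min_eq_left hi]

lemma udrop_le (w : Word) (p q j : ℕ) (hj : j ≤ p) (hq : p ≤ w.length) :
    (w.take p ++ w.drop q).drop j = wfactor w j p ++ w.drop q := by
  rw [List.drop_append_of_le_length (by simp [List.length_take]; omega), List.drop_take]; rfl

lemma udrop_ge (w : Word) (p q j : ℕ) (hj : p ≤ j) (hq : p ≤ w.length) :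
    (w.take p ++ w.drop q).drop j = w.drop (q + (j - p)) := by
  calc (w.take p ++ w.drop q).drop j
      = ((w.take p ++ w.drop q).drop p).drop (j - p) := by
        rw [List.drop_drop]; congr 1; omega
    _ = (w.drop q).drop (j - p) := by
        rw [udrop_le w p q p le_rfl hq]; simp [wfactor]
    _ = w.drop (q + (j - p)) := List.drop_drop

lemma utake_ge (w : Word) (p q i : ℕ) (hi : p ≤ i) (hq : p ≤ w.length) :
    (w.take p ++ w.drop q).take i = w.take p ++ wfactor w q (q + (i - p)) := by
  have h1 : i = (w.take p).length + (i - p) := by simp [List.length_take]; omega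
  rw [h1, List.take_length_add_append]
  unfold wfactor
  congr 2
  omega

lemma umidA (w : Word) (p q i j : ℕ) (hi : i ≤ j) (hj : j ≤ p) (hq : p ≤ w.length) :
    ((w.take p ++ w.drop q).drop i).take (j - i) = wfactor w i j := by
  rw [udrop_le w p q i (le_trans hi hj) hq,
    List.take_append_of_le_length (by unfold wfactor; simp [List.length_take]; omega)]
  unfold wfactor
  rw [List.take_take, min_eq_left (by omega)]

lemma umidB (w : Word) (p q i j : ℕ) (hi : i ≤ p) (hj : p ≤ j) (hq : p ≤ w.length) :
    ((w.take p ++ w.drop q).drop i).take (j - i) =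
      wfactor w i p ++ wfactor w q (q + (j - p)) := by
  rw [udrop_le w p q i hi hq]
  have hlen : (wfactor w i p).length = p - i := by
    unfold wfactor; simp [List.length_take, List.length_drop]; omega
  have h2 : j - i = (wfactor w i p).length + (j - p) := by rw [hlen]; omega
  rw [h2, List.take_length_add_append]
  unfold wfactor
  congr 2
  omega

lemma umidC (w : Word) (p q i j : ℕ) (hp : p ≤ i) (hij : i ≤ j) (hq : p ≤ w.length) :
    ((w.take p ++ w.drop q).drop i).take (j - i) =
      wfactor w (q + (i - p)) (q + (j - p)) := by
  rw [udrop_ge w p q i hp hq]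
  unfold wfactor
  congr 1
  omega

lemma sfactor_take (w : Word) (a b c : ℕ) (hab : a ≤ b) (hbc : b ≤ c) :
    (wfactor w a c).take (b - a) = wfactor w a b := by
  unfold wfactor
  rw [List.take_take, min_eq_left (by omega)]

lemma sfactor_drop (w : Word) (a b c : ℕ) (hab : a ≤ b) (hbc : b ≤ c) :
    (wfactor w a c).drop (b - a) = wfactor w b c := by
  unfold wfactor
  rw [List.drop_take, List.drop_drop]
  have h1 : a + (b - a) = b := by omega
  have h2 : c - a - (b - a) = c - b := by omega
  rw [h1, h2]

/-! ### Sum manipulation lemmas -/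

variable [CommRing A]

lemma sum_Icc_if (n L c : ℕ) (hL : L ≤ n) (b : ℕ → A) :
    ∑ j ∈ Finset.Icc c L, b j
      = ∑ j ∈ Finset.range (n + 1), if c ≤ j ∧ j ≤ L then b j else 0 := by
  rw [← Finset.sum_filter]
  apply Finset.sum_congr _ fun _ _ => rfl
  ext j
  simp [Nat.lt_succ_iff]
  omega

lemma sum_Ioc_if (n c : ℕ) (b : ℕ → A) :
    ∑ j ∈ Finset.Ioc c n, b j = ∑ j ∈ Finset.range (n + 1), if c < j then b j else 0 := by
  rw [← Finset.sum_filter]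
  apply Finset.sum_congr _ fun _ _ => rfl
  ext j
  simp [Nat.lt_succ_iff]
  omega

lemma sum_range_ext (L n : ℕ) (h : L ≤ n) (b : ℕ → A) (hb : ∀ i, L < i → b i = 0) :
    ∑ i ∈ Finset.range (L + 1), b i = ∑ i ∈ Finset.range (n + 1), b i := by
  apply Finset.sum_subset (by intro x hx; simp at *; omega)
  intro i hi hni
  simp at hi hni
  exact hb i (by omega)

lemma push_ite {c : Prop} [Decidable c] {s : Finset ℕ} (t : ℕ → A) :
    (if c then ∑ x ∈ s, t x else 0) = ∑ x ∈ s, if c then t x else 0 := by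
  split_ifs with h
  · rfl
  · exact (Finset.sum_eq_zero fun _ _ => rfl).symm

/-- `tri` as an if-guarded sum over a fixed box. -/
lemma tri_if (f g : Word → A) (u : Word) (n : ℕ) (hn : u.length ≤ n) :
    tri f g u = ∑ i ∈ Finset.range (n + 1), ∑ j ∈ Finset.range (n + 1),
      if i ≤ j ∧ j ≤ u.length then
        f (u.take i ++ u.drop j) * g ((u.drop i).take (j - i)) else 0 := by
  show (∑ i ∈ Finset.range (u.length + 1), ∑ j ∈ Finset.Icc i u.length,
    f (u.take i ++ u.drop j) * g ((u.drop i).take (j - i))) = _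
  have step : ∀ i, (∑ j ∈ Finset.Icc i u.length,
      f (u.take i ++ u.drop j) * g ((u.drop i).take (j - i)))
      = ∑ j ∈ Finset.range (n + 1), if i ≤ j ∧ j ≤ u.length then
          f (u.take i ++ u.drop j) * g ((u.drop i).take (j - i)) else 0 :=
    fun i => sum_Icc_if n u.length i hn _
  rw [Finset.sum_congr rfl fun i _ => step i]
  exact sum_range_ext u.length n hn _ (fun i hi =>
    Finset.sum_eq_zero fun j _ => if_neg (by omega))

lemma sum4 (S₁ S₂ S₃ S₄ : Finset ℕ) (t : (ℕ × ℕ) × ℕ × ℕ → A) :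
    ∑ x ∈ (S₁ ×ˢ S₂) ×ˢ (S₃ ×ˢ S₄), t x
      = ∑ p ∈ S₁, ∑ q ∈ S₂, ∑ i ∈ S₃, ∑ j ∈ S₄, t ((p, q), (i, j)) := by
  rw [Finset.sum_product, Finset.sum_product]
  exact Finset.sum_congr rfl fun x _ => Finset.sum_congr rfl fun y _ => by
    rw [Finset.sum_product]

end helpers

section arith

lemma ar1 (L p q i j : ℕ) :
    (((p < L + 1 ∧ q < L + 1) ∧ i < L + 1 ∧ j < L + 1) ∧
        p ≤ q ∧ q ≤ L ∧ i ≤ j ∧ j ≤ p + (L - q)) ∧ j < p →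
    ((i < L + 1 ∧ j < L + 1) ∧ p < L + 1 ∧ q < L + 1) ∧ i ≤ j ∧ j < p ∧ p ≤ q ∧ q ≤ L := by
  omega

lemma ar2 (L a b c d : ℕ) :
    ((a < L + 1 ∧ b < L + 1) ∧ c < L + 1 ∧ d < L + 1) ∧ a ≤ b ∧ b < c ∧ c ≤ d ∧ d ≤ L →
    (((c < L + 1 ∧ d < L + 1) ∧ a < L + 1 ∧ b < L + 1) ∧
        c ≤ d ∧ d ≤ L ∧ a ≤ b ∧ b ≤ c + (L - d)) ∧ b < c := by
  omega

lemma ar3 (L p q i j : ℕ) :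
    ((((p < L + 1 ∧ q < L + 1) ∧ i < L + 1 ∧ j < L + 1) ∧
          p ≤ q ∧ q ≤ L ∧ i ≤ j ∧ j ≤ p + (L - q)) ∧ ¬j < p) ∧ p < i →
    ((p < L + 1 ∧ q < L + 1) ∧ q + (i - p) < L + 1 ∧ q + (j - p) < L + 1) ∧
      p ≤ q ∧ q < q + (i - p) ∧ q + (i - p) ≤ q + (j - p) ∧ q + (j - p) ≤ L := by
  omega

lemma ar4 (L a b c d : ℕ) :
    ((a < L + 1 ∧ b < L + 1) ∧ c < L + 1 ∧ d < L + 1) ∧ a ≤ b ∧ b < c ∧ c ≤ d ∧ d ≤ L →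
    ((((a < L + 1 ∧ b < L + 1) ∧ a + (c - b) < L + 1 ∧ a + (d - b) < L + 1) ∧
          a ≤ b ∧ b ≤ L ∧ a + (c - b) ≤ a + (d - b) ∧ a + (d - b) ≤ a + (L - b)) ∧
        ¬a + (d - b) < a) ∧ a < a + (c - b) := by
  omega

lemma ar5 (L p q i j : ℕ) :
    ((((p < L + 1 ∧ q < L + 1) ∧ i < L + 1 ∧ j < L + 1) ∧
          p ≤ q ∧ q ≤ L ∧ i ≤ j ∧ j ≤ p + (L - q)) ∧ ¬j < p) ∧ p < i →
    True ∧ p + (q + (i - p) - q) = i ∧ p + (q + (j - p) - q) = j := by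
  intro ha
  refine ⟨trivial, ?_, ?_⟩ <;> omega

lemma ar6 (L a b c d : ℕ) :
    ((a < L + 1 ∧ b < L + 1) ∧ c < L + 1 ∧ d < L + 1) ∧ a ≤ b ∧ b < c ∧ c ≤ d ∧ d ≤ L →
    True ∧ b + (a + (c - b) - a) = c ∧ b + (a + (d - b) - a) = d := by
  intro ha
  refine ⟨trivial, ?_, ?_⟩ <;> omega

lemma ar7 (L p q i j : ℕ) :
    ((((p < L + 1 ∧ q < L + 1) ∧ i < L + 1 ∧ j < L + 1) ∧
          p ≤ q ∧ q ≤ L ∧ i ≤ j ∧ j ≤ p + (L - q)) ∧ ¬j < p) ∧ ¬p < i →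
    ((i < L + 1 ∧ q + (j - p) < L + 1) ∧ p - i < L + 1 ∧ q - i < L + 1) ∧
      i ≤ q + (j - p) ∧ q + (j - p) ≤ L ∧ p - i ≤ q - i ∧ q - i ≤ q + (j - p) - i := by
  omega

lemma ar8 (L a b c d : ℕ) :
    ((a < L + 1 ∧ b < L + 1) ∧ c < L + 1 ∧ d < L + 1) ∧ a ≤ b ∧ b ≤ L ∧ c ≤ d ∧ d ≤ b - a →
    ((((a + c < L + 1 ∧ a + d < L + 1) ∧ a < L + 1 ∧ c + (b - d) < L + 1) ∧
          a + c ≤ a + d ∧ a + d ≤ L ∧ a ≤ c + (b - d) ∧ c + (b - d) ≤ a + c + (L - (a + d))) ∧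
        ¬c + (b - d) < a + c) ∧ ¬a + c < a := by
  omega

lemma ar9 (L p q i j : ℕ) :
    ((((p < L + 1 ∧ q < L + 1) ∧ i < L + 1 ∧ j < L + 1) ∧
          p ≤ q ∧ q ≤ L ∧ i ≤ j ∧ j ≤ p + (L - q)) ∧ ¬j < p) ∧ ¬p < i →
    (i + (p - i) = p ∧ i + (q - i) = q) ∧ True ∧ p - i + (q + (j - p) - (q - i)) = j := by
  intro ha
  refine ⟨⟨?_, ?_⟩, trivial, ?_⟩ <;> omega

lemma ar10 (L a b c d : ℕ) :
    ((a < L + 1 ∧ b < L + 1) ∧ c < L + 1 ∧ d < L + 1) ∧ a ≤ b ∧ b ≤ L ∧ c ≤ d ∧ d ≤ b - a →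
    (True ∧ a + d + (c + (b - d) - (a + c)) = b) ∧ a + c - a = c ∧ a + d - a = d := by
  intro ha
  refine ⟨⟨trivial, ?_⟩, ?_, ?_⟩ <;> omega

end arith

section key

variable [CommRing A]

private lemma key (f g h : Word → A) (w : Word) :
    tri (tri f g) h w - tri f (tri g h) w =
      ∑ i₁ ∈ Finset.range (w.length + 1), ∑ i₂ ∈ Finset.Icc i₁ w.length,
        ∑ i₃ ∈ Finset.Ioc i₂ w.length, ∑ i₄ ∈ Finset.Icc i₃ w.length,
          f (w.take i₁ ++ wfactor w i₂ i₃ ++ w.drop i₄) *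
            (g (wfactor w i₁ i₂) * h (wfactor w i₃ i₄) +
              h (wfactor w i₁ i₂) * g (wfactor w i₃ i₄)) := by
  classical
  set S : Finset ((ℕ × ℕ) × ℕ × ℕ) := (Finset.range (w.length + 1) ×ˢ Finset.range (w.length + 1)) ×ˢ (Finset.range (w.length + 1) ×ˢ Finset.range (w.length + 1)) with hS
  -- the three term functions
  set T1 : (ℕ × ℕ) × ℕ × ℕ → A := fun x =>
    f ((w.take x.1.1 ++ w.drop x.1.2).take x.2.1 ++ (w.take x.1.1 ++ w.drop x.1.2).drop x.2.2) *
      g (((w.take x.1.1 ++ w.drop x.1.2).drop x.2.1).take (x.2.2 - x.2.1)) *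
      h ((w.drop x.1.1).take (x.1.2 - x.1.1)) with hT1
  set T2 : (ℕ × ℕ) × ℕ × ℕ → A := fun x =>
    f (w.take x.1.1 ++ w.drop x.1.2) *
      (g ((wfactor w x.1.1 x.1.2).take x.2.1 ++ (wfactor w x.1.1 x.1.2).drop x.2.2) *
        h (((wfactor w x.1.1 x.1.2).drop x.2.1).take (x.2.2 - x.2.1))) with hT2
  set Tgh : (ℕ × ℕ) × ℕ × ℕ → A := fun x =>
    f (w.take x.1.1 ++ wfactor w x.1.2 x.2.1 ++ w.drop x.2.2) *
      (g (wfactor w x.1.1 x.1.2) * h (wfactor w x.2.1 x.2.2)) with hTgh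
  set Thg : (ℕ × ℕ) × ℕ × ℕ → A := fun x =>
    f (w.take x.1.1 ++ wfactor w x.1.2 x.2.1 ++ w.drop x.2.2) *
      (h (wfactor w x.1.1 x.1.2) * g (wfactor w x.2.1 x.2.2)) with hThg
  -- the index sets
  set C1 : (ℕ × ℕ) × ℕ × ℕ → Prop := fun x =>
    x.1.1 ≤ x.1.2 ∧ x.1.2 ≤ w.length ∧ x.2.1 ≤ x.2.2 ∧ x.2.2 ≤ x.1.1 + (w.length - x.1.2) with hC1
  set C2 : (ℕ × ℕ) × ℕ × ℕ → Prop := fun x =>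
    x.1.1 ≤ x.1.2 ∧ x.1.2 ≤ w.length ∧ x.2.1 ≤ x.2.2 ∧ x.2.2 ≤ x.1.2 - x.1.1 with hC2
  set CR : (ℕ × ℕ) × ℕ × ℕ → Prop := fun x =>
    x.1.1 ≤ x.1.2 ∧ x.1.2 < x.2.1 ∧ x.2.1 ≤ x.2.2 ∧ x.2.2 ≤ w.length with hCR
  -- Step 1: LHS₁ as a filtered sum
  have E1 : tri (tri f g) h w = ∑ x ∈ S.filter C1, T1 x := by
    rw [Finset.sum_filter, hS, sum4]
    show (∑ p ∈ Finset.range (w.length + 1), ∑ q ∈ Finset.Icc p w.length,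
      tri f g (w.take p ++ w.drop q) * h ((w.drop p).take (q - p))) = _
    refine Finset.sum_congr rfl fun p hp => ?_
    rw [sum_Icc_if w.length w.length p le_rfl]
    refine Finset.sum_congr rfl fun q hq => ?_
    by_cases hc : p ≤ q ∧ q ≤ w.length
    · rw [if_pos hc, tri_if f g _ w.length (by rw [ulen w p q hc.1 hc.2]; omega), Finset.sum_mul]
      refine Finset.sum_congr rfl fun i _ => ?_
      rw [Finset.sum_mul]
      refine Finset.sum_congr rfl fun j _ => ?_
      rw [ite_mul, zero_mul]
      refine if_congr ?_ rfl rfl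
      rw [ulen w p q hc.1 hc.2]
      simp only [hC1]
      constructor
      · exact fun hx => ⟨hc.1, hc.2, hx⟩
      · exact fun hx => ⟨hx.2.2.1, hx.2.2.2⟩
    · rw [if_neg hc]
      exact (Finset.sum_eq_zero fun i _ => Finset.sum_eq_zero fun j _ =>
        if_neg (by simp only [hC1]; exact fun hC => hc ⟨hC.1, hC.2.1⟩)).symm
  -- Step 2: LHS₂ as a filtered sum
  have E2 : tri f (tri g h) w = ∑ x ∈ S.filter C2, T2 x := by
    rw [Finset.sum_filter, hS, sum4]
    show (∑ p ∈ Finset.range (w.length + 1), ∑ q ∈ Finset.Icc p w.length,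
      f (w.take p ++ w.drop q) * tri g h ((w.drop p).take (q - p))) = _
    refine Finset.sum_congr rfl fun p hp => ?_
    rw [sum_Icc_if w.length w.length p le_rfl]
    refine Finset.sum_congr rfl fun q hq => ?_
    by_cases hc : p ≤ q ∧ q ≤ w.length
    · have hlen : ((w.drop p).take (q - p)).length = q - p := by
        simp [List.length_take, List.length_drop]; omega
      rw [if_pos hc, tri_if g h _ w.length (by rw [hlen]; omega), Finset.mul_sum]
      refine Finset.sum_congr rfl fun i _ => ?_
      rw [Finset.mul_sum]
      refine Finset.sum_congr rfl fun j _ => ?_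
      rw [mul_ite, mul_zero]
      refine if_congr ?_ rfl rfl
      rw [hlen]
      simp only [hC2]
      constructor
      · exact fun hx => ⟨hc.1, hc.2, hx⟩
      · exact fun hx => ⟨hx.2.2.1, hx.2.2.2⟩
    · rw [if_neg hc]
      exact (Finset.sum_eq_zero fun i _ => Finset.sum_eq_zero fun j _ =>
        if_neg (by simp only [hC2]; exact fun hC => hc ⟨hC.1, hC.2.1⟩)).symm
  -- Step 3: RHS as a filtered sum
  have E3 : (∑ i₁ ∈ Finset.range (w.length + 1), ∑ i₂ ∈ Finset.Icc i₁ w.length,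
        ∑ i₃ ∈ Finset.Ioc i₂ w.length, ∑ i₄ ∈ Finset.Icc i₃ w.length,
          f (w.take i₁ ++ wfactor w i₂ i₃ ++ w.drop i₄) *
            (g (wfactor w i₁ i₂) * h (wfactor w i₃ i₄) +
              h (wfactor w i₁ i₂) * g (wfactor w i₃ i₄)))
      = ∑ x ∈ S.filter CR, Tgh x + ∑ x ∈ S.filter CR, Thg x := by
    rw [← Finset.sum_add_distrib, Finset.sum_filter, hS, sum4]
    refine Finset.sum_congr rfl fun i₁ _ => ?_
    rw [sum_Icc_if w.length w.length i₁ le_rfl]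
    refine Finset.sum_congr rfl fun i₂ _ => ?_
    by_cases hc : i₁ ≤ i₂ ∧ i₂ ≤ w.length
    · rw [if_pos hc, sum_Ioc_if w.length i₂]
      refine Finset.sum_congr rfl fun i₃ _ => ?_
      by_cases hc3 : i₂ < i₃
      · rw [if_pos hc3, sum_Icc_if w.length w.length i₃ le_rfl]
        refine Finset.sum_congr rfl fun i₄ _ => ?_
        refine if_congr ?_ ?_ rfl
        · simp only [hCR]
          constructor
          · exact fun hx => ⟨hc.1, hc3, hx.1, hx.2⟩
          · exact fun hx => ⟨hx.2.2.1, hx.2.2.2⟩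
        · simp only [hTgh, hThg]
          exact mul_add _ _ _
      · rw [if_neg hc3]
        exact (Finset.sum_eq_zero fun i₄ _ =>
          if_neg (by simp only [hCR]; exact fun hC => hc3 hC.2.1)).symm
    · rw [if_neg hc]
      exact (Finset.sum_eq_zero fun i₃ _ => Finset.sum_eq_zero fun i₄ _ =>
        if_neg (by simp only [hCR]; intro hC; exact hc ⟨hC.1, by omega⟩)).symm
  -- Step 4: split the C1-sum in three parts
  have split1 : ∑ x ∈ S.filter C1, T1 x =
      ∑ x ∈ (S.filter C1).filter (fun x => x.2.2 < x.1.1), T1 x +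
      ∑ x ∈ ((S.filter C1).filter (fun x => ¬ x.2.2 < x.1.1)).filter
        (fun x => x.1.1 < x.2.1), T1 x +
      ∑ x ∈ ((S.filter C1).filter (fun x => ¬ x.2.2 < x.1.1)).filter
        (fun x => ¬ x.1.1 < x.2.1), T1 x := by
    rw [add_assoc, Finset.sum_filter_add_sum_filter_not, Finset.sum_filter_add_sum_filter_not]
  -- Step 5: part A equals the g-h part of the RHS
  have EA : ∑ x ∈ (S.filter C1).filter (fun x => x.2.2 < x.1.1), T1 x
      = ∑ x ∈ S.filter CR, Tgh x := by
    refine Finset.sum_nbij' (fun x => ((x.2.1, x.2.2), (x.1.1, x.1.2)))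
      (fun x => ((x.2.1, x.2.2), (x.1.1, x.1.2))) ?_ ?_ ?_ ?_ ?_
    · rintro ⟨⟨p, q⟩, i, j⟩ ha
      simp only [Finset.mem_filter, hS, Finset.mem_product, Finset.mem_range, hC1, hCR] at ha ⊢
      revert ha
      exact ar1 w.length p q i j
    · rintro ⟨⟨a, b⟩, c, d⟩ ha
      simp only [Finset.mem_filter, hS, Finset.mem_product, Finset.mem_range, hC1, hCR] at ha ⊢
      revert ha
      exact ar2 w.length a b c d
    · rintro ⟨⟨p, q⟩, i, j⟩ _; rfl
    · rintro ⟨⟨a, b⟩, c, d⟩ _; rfl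
    · rintro ⟨⟨p, q⟩, i, j⟩ ha
      simp only [Finset.mem_filter, hS, Finset.mem_product, Finset.mem_range, hC1] at ha
      obtain ⟨⟨⟨⟨hb1, hb2⟩, hb3, hb4⟩, hc1, hc2, hc3, hc4⟩, hx1⟩ := ha
      simp only [hT1, hTgh]
      rw [utake w p q i (by omega) (by omega), udrop_le w p q j (by omega) (by omega),
        umidA w p q i j (by omega) (by omega) (by omega), ← List.append_assoc]
      simp only [wfactor]
      ring
  -- Step 6: part C equals the h-g part of the RHS
  have EC : ∑ x ∈ ((S.filter C1).filter (fun x => ¬ x.2.2 < x.1.1)).filter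
        (fun x => x.1.1 < x.2.1), T1 x
      = ∑ x ∈ S.filter CR, Thg x := by
    refine Finset.sum_nbij'
      (fun x => ((x.1.1, x.1.2), (x.1.2 + (x.2.1 - x.1.1), x.1.2 + (x.2.2 - x.1.1))))
      (fun x => ((x.1.1, x.1.2), (x.1.1 + (x.2.1 - x.1.2), x.1.1 + (x.2.2 - x.1.2))))
      ?_ ?_ ?_ ?_ ?_
    · rintro ⟨⟨p, q⟩, i, j⟩ ha
      simp only [Finset.mem_filter, hS, Finset.mem_product, Finset.mem_range, hC1, hCR] at ha ⊢
      revert ha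
      exact ar3 w.length p q i j
    · rintro ⟨⟨a, b⟩, c, d⟩ ha
      simp only [Finset.mem_filter, hS, Finset.mem_product, Finset.mem_range, hC1, hCR] at ha ⊢
      revert ha
      exact ar4 w.length a b c d
    · rintro ⟨⟨p, q⟩, i, j⟩ ha
      simp only [Finset.mem_filter, hS, Finset.mem_product, Finset.mem_range, hC1] at ha
      simp only [Prod.mk.injEq]
      revert ha
      exact ar5 w.length p q i j
    · rintro ⟨⟨a, b⟩, c, d⟩ ha
      simp only [Finset.mem_filter, hS, Finset.mem_product, Finset.mem_range, hCR] at ha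
      simp only [Prod.mk.injEq]
      revert ha
      exact ar6 w.length a b c d
    · rintro ⟨⟨p, q⟩, i, j⟩ ha
      simp only [Finset.mem_filter, hS, Finset.mem_product, Finset.mem_range, hC1] at ha
      obtain ⟨⟨⟨⟨⟨hb1, hb2⟩, hb3, hb4⟩, hc1, hc2, hc3, hc4⟩, hx1⟩, hx2⟩ := ha
      simp only [hT1, hThg]
      rw [utake_ge w p q i (by omega) (by omega), udrop_ge w p q j (by omega) (by omega),
        umidC w p q i j (by omega) (by omega) (by omega)]
      simp only [wfactor]
      ring
  -- Step 7: part B cancels against LHS₂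
  have EB : ∑ x ∈ ((S.filter C1).filter (fun x => ¬ x.2.2 < x.1.1)).filter
        (fun x => ¬ x.1.1 < x.2.1), T1 x
      = ∑ x ∈ S.filter C2, T2 x := by
    refine Finset.sum_nbij'
      (fun x => ((x.2.1, x.1.2 + (x.2.2 - x.1.1)), (x.1.1 - x.2.1, x.1.2 - x.2.1)))
      (fun x => ((x.1.1 + x.2.1, x.1.1 + x.2.2), (x.1.1, x.2.1 + (x.1.2 - x.2.2))))
      ?_ ?_ ?_ ?_ ?_
    · rintro ⟨⟨p, q⟩, i, j⟩ ha
      simp only [Finset.mem_filter, hS, Finset.mem_product, Finset.mem_range, hC1, hC2] at ha ⊢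
      revert ha
      exact ar7 w.length p q i j
    · rintro ⟨⟨a, b⟩, c, d⟩ ha
      simp only [Finset.mem_filter, hS, Finset.mem_product, Finset.mem_range, hC1, hC2] at ha ⊢
      revert ha
      exact ar8 w.length a b c d
    · rintro ⟨⟨p, q⟩, i, j⟩ ha
      simp only [Finset.mem_filter, hS, Finset.mem_product, Finset.mem_range, hC1] at ha
      simp only [Prod.mk.injEq]
      revert ha
      exact ar9 w.length p q i j
    · rintro ⟨⟨a, b⟩, c, d⟩ ha
      simp only [Finset.mem_filter, hS, Finset.mem_product, Finset.mem_range, hC2] at ha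
      simp only [Prod.mk.injEq]
      revert ha
      exact ar10 w.length a b c d
    · rintro ⟨⟨p, q⟩, i, j⟩ ha
      simp only [Finset.mem_filter, hS, Finset.mem_product, Finset.mem_range, hC1] at ha
      obtain ⟨⟨⟨⟨⟨hb1, hb2⟩, hb3, hb4⟩, hc1, hc2, hc3, hc4⟩, hx1⟩, hx2⟩ := ha
      simp only [hT1, hT2]
      rw [utake w p q i (by omega) (by omega), udrop_ge w p q j (by omega) (by omega),
        umidB w p q i j (by omega) (by omega) (by omega),
        sfactor_take w i p (q + (j - p)) (by omega) (by omega),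
        sfactor_drop w i q (q + (j - p)) (by omega) (by omega),
        sfactor_drop w i p (q + (j - p)) (by omega) (by omega)]
      have e1 : q - i - (p - i) = q - p := by omega
      rw [e1, sfactor_take w p q (q + (j - p)) (by omega) (by omega)]
      simp only [wfactor]
      ring
  rw [E1, E2, E3, split1, EA, EB, EC]
  ring

end key

/-- for `f, g, h ∈ G^0` and every word `w`, the pre-Lie associator is
`((f ◁ g) ◁ h − f ◁ (g ◁ h))(w) = Σ f(u ++ v ++ s)·(g(q)h(r) + h(q)g(r))`, the sum running
over all factorizations `w = u ++ q ++ v ++ r ++ s` into five consecutive factors with `v`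
nonempty.  In particular the associator is symmetric in `g` and `h`. -/
theorem stmt6 [CommRing A] (f g h : Word → A)
    (hf : f [] = 0) (hg : g [] = 0) (hh : h [] = 0) (w : Word) :
    (tri (tri f g) h w - tri f (tri g h) w =
      ∑ i₁ ∈ Finset.range (w.length + 1), ∑ i₂ ∈ Finset.Icc i₁ w.length,
        ∑ i₃ ∈ Finset.Ioc i₂ w.length, ∑ i₄ ∈ Finset.Icc i₃ w.length,
          f (w.take i₁ ++ wfactor w i₂ i₃ ++ w.drop i₄) *
            (g (wfactor w i₁ i₂) * h (wfactor w i₃ i₄) +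
              h (wfactor w i₁ i₂) * g (wfactor w i₃ i₄))) ∧
    (tri (tri f g) h - tri f (tri g h) = tri (tri f h) g - tri f (tri h g)) := by
  refine ⟨key f g h w, funext fun w' => ?_⟩
  have h1 := key f g h w'
  have h2 := key f h g w'
  simp only [Pi.sub_apply]
  rw [h1, h2]
  refine Finset.sum_congr rfl fun i₁ _ => Finset.sum_congr rfl fun i₂ _ =>
    Finset.sum_congr rfl fun i₃ _ => Finset.sum_congr rfl fun i₄ _ => ?_
  ring
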